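/- Let b > 1 be an integer, and write k = ℓ·(b-1) + m with m < b-1. If a_1, ..., a_b are natural numbers satisfying ∑_{i=1}^{b} (i-1)·a_i = k, then ∑_{i=1}^{b} (i-1)²·a_i ≤ ℓ·(b-1)² + m². -/

import Mathlib

lemma arith_step (n d k : ℕ) (hn : 0 < n) (hd : d ≤ n) :
    d ^ 2 + (k / n) * n ^ 2 + (k % n) ^ 2 ≤ ((k + d) / n) * n ^ 2 + ((k + d) % n) ^ 2 := by
  obtain ⟨q, r, hrn, hk⟩ : ∃ q r, r < n ∧ k = n * q + r :=
    ⟨k / n, k % n, Nat.mod_lt _ hn, (Nat.div_add_mod k n).symm⟩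
  have hq : k / n = q := by rw [hk, Nat.mul_add_div hn, Nat.div_eq_of_lt hrn]; omega
  have hr : k % n = r := by rw [hk, Nat.mul_add_mod, Nat.mod_eq_of_lt hrn]
  rw [hq, hr]
  rcases lt_or_ge (r + d) n with h | h
  · have heq : k + d = n * q + (r + d) := by omega
    have hdiv : (k + d) / n = q := by rw [heq, Nat.mul_add_div hn, Nat.div_eq_of_lt h]; omega
    have hmod : (k + d) % n = r + d := by rw [heq, Nat.mul_add_mod, Nat.mod_eq_of_lt h]
    rw [hdiv, hmod]
    nlinarith
  · have heq : k + d = n * (q + 1) + (r + d - n) := by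
      have : n * (q + 1) = n * q + n := by ring
      omega
    have hlt : r + d - n < n := by omega
    have hdiv : (k + d) / n = q + 1 := by
      rw [heq, Nat.mul_add_div hn, Nat.div_eq_of_lt hlt]
    have hmod : (k + d) % n = r + d - n := by
      rw [heq, Nat.mul_add_mod, Nat.mod_eq_of_lt hlt]
    rw [hdiv, hmod]
    set s := r + d - n with hs
    have h1 : s + n = r + d := by omega
    have h2 : s ≤ r := by omega
    zify
    nlinarith [mul_nonneg (by omega : (0:ℤ) ≤ (n:ℤ) - r) (by omega : (0:ℤ) ≤ (r:ℤ) - s)]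

lemma aux_main (b : ℕ) (hb : 1 < b) :
    ∀ k, ∀ a : ℕ → ℕ, (∑ i ∈ Finset.Icc 1 b, (i - 1) * a i = k) →
    ∑ i ∈ Finset.Icc 1 b, (i - 1) ^ 2 * a i ≤ (k / (b - 1)) * (b - 1) ^ 2 + (k % (b - 1)) ^ 2 := by
  intro k
  induction k using Nat.strong_induction_on with
  | _ k IH =>
    intro a hsum
    rcases Nat.eq_zero_or_pos k with rfl | hk
    · have h0 : ∀ i ∈ Finset.Icc 1 b, (i - 1) * a i = 0 :=
        fun i hi => (Finset.sum_eq_zero_iff.mp hsum) i hi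
      have : ∑ i ∈ Finset.Icc 1 b, (i - 1) ^ 2 * a i = 0 := by
        apply Finset.sum_eq_zero
        intro i hi
        have := h0 i hi
        nlinarith [sq_nonneg (i - 1)]
      simp [this]
    · have hne : ∑ i ∈ Finset.Icc 1 b, (i - 1) * a i ≠ 0 := by omega
      obtain ⟨i, hi, hine⟩ := Finset.exists_ne_zero_of_sum_ne_zero hne
      obtain ⟨hi1, hib⟩ := Finset.mem_Icc.mp hi
      have hd1 : 1 ≤ i - 1 := by
        rcases Nat.eq_or_lt_of_le hi1 with h | h
        · exfalso; rw [← h] at hine; simp at hine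
        · omega
      have hai : 1 ≤ a i := by
        by_contra h
        push_neg at h
        interval_cases (a i) <;> simp_all
      set d := i - 1 with hdd
      set n := b - 1 with hnn
      have hdn : d ≤ n := by omega
      have hn : 0 < n := by omega
      -- define reduced a
      set a' : ℕ → ℕ := fun j => if j = i then a i - 1 else a j with ha'
      have key1 : ∑ j ∈ Finset.Icc 1 b, (j - 1) * a' j + d = k := by
        have split1 : (i - 1) * a' i + ∑ j ∈ (Finset.Icc 1 b).erase i, (j - 1) * a' j
            = ∑ j ∈ Finset.Icc 1 b, (j - 1) * a' j := Finset.add_sum_erase _ (fun j => (j - 1) * a' j) hi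
        have split2 : (i - 1) * a i + ∑ j ∈ (Finset.Icc 1 b).erase i, (j - 1) * a j
            = ∑ j ∈ Finset.Icc 1 b, (j - 1) * a j := Finset.add_sum_erase _ (fun j => (j - 1) * a j) hi
        have e1 : ∑ j ∈ (Finset.Icc 1 b).erase i, (j - 1) * a' j
            = ∑ j ∈ (Finset.Icc 1 b).erase i, (j - 1) * a j := by
          apply Finset.sum_congr rfl
          intro j hj
          have : j ≠ i := Finset.ne_of_mem_erase hj
          simp [ha', this]
        have e2 : (i - 1) * a' i + d = (i - 1) * a i := by
          simp only [ha', if_pos rfl]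
          obtain ⟨c, hc⟩ : ∃ c, a i = c + 1 := ⟨a i - 1, by omega⟩
          rw [hc]
          simp [Nat.mul_add]
          exact hdd
        omega
      have key2 : ∑ j ∈ Finset.Icc 1 b, (j - 1) ^ 2 * a j
          = ∑ j ∈ Finset.Icc 1 b, (j - 1) ^ 2 * a' j + d ^ 2 := by
        have split1 : (i - 1) ^ 2 * a' i + ∑ j ∈ (Finset.Icc 1 b).erase i, (j - 1) ^ 2 * a' j
            = ∑ j ∈ Finset.Icc 1 b, (j - 1) ^ 2 * a' j := Finset.add_sum_erase _ (fun j => (j - 1) ^ 2 * a' j) hi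
        have split2 : (i - 1) ^ 2 * a i + ∑ j ∈ (Finset.Icc 1 b).erase i, (j - 1) ^ 2 * a j
            = ∑ j ∈ Finset.Icc 1 b, (j - 1) ^ 2 * a j := Finset.add_sum_erase _ (fun j => (j - 1) ^ 2 * a j) hi
        have e1 : ∑ j ∈ (Finset.Icc 1 b).erase i, (j - 1) ^ 2 * a' j
            = ∑ j ∈ (Finset.Icc 1 b).erase i, (j - 1) ^ 2 * a j := by
          apply Finset.sum_congr rfl
          intro j hj
          have : j ≠ i := Finset.ne_of_mem_erase hj
          simp [ha', this]
        have e2 : (i - 1) ^ 2 * a' i + d ^ 2 = (i - 1) ^ 2 * a i := by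
          simp only [ha', if_pos rfl]
          obtain ⟨c, hc⟩ : ∃ c, a i = c + 1 := ⟨a i - 1, by omega⟩
          rw [hc]
          simp [Nat.mul_add]
          exact hdd
        omega
      set k' := k - d with hk'
      have hk'lt : k' < k := by omega
      have hsum' : ∑ j ∈ Finset.Icc 1 b, (j - 1) * a' j = k' := by omega
      have IH' := IH k' hk'lt a' hsum'
      have harith := arith_step n d k' hn hdn
      have hkd : k' + d = k := by omega
      rw [hkd] at harith
      omega

theorem stmt1 (b ℓ m : ℕ) (hb : 1 < b) (hm : m < b - 1)
    (a : ℕ → ℕ) (hsum : ∑ i ∈ Finset.Icc 1 b, (i - 1) * a i = ℓ * (b - 1) + m) :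
    ∑ i ∈ Finset.Icc 1 b, (i - 1) ^ 2 * a i ≤ ℓ * (b - 1) ^ 2 + m ^ 2 := by
  have hn : 0 < b - 1 := by omega
  have h := aux_main b hb (ℓ * (b - 1) + m) a hsum
  have hcomm : ℓ * (b - 1) + m = (b - 1) * ℓ + m := by ring
  have hdiv : (ℓ * (b - 1) + m) / (b - 1) = ℓ := by
    rw [hcomm, Nat.mul_add_div hn, Nat.div_eq_of_lt hm]; omega
  have hmod : (ℓ * (b - 1) + m) % (b - 1) = m := by
    rw [hcomm, Nat.mul_add_mod, Nat.mod_eq_of_lt hm]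
  rw [hdiv, hmod] at h
  exact h
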